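/- Let a, b, c be complex numbers with Re(c − a − b) < 0, s = c − a − b not an integer, and none of a, b, c, c−a, c−b a nonpositive integer. Then as n → ∞, S_n(a,b;c) = ∑_{k=0}^{n-1} (a)_k(b)_k/((c)_k k!) ∼ Γ(c) n^{a+b−c} / ((a+b−c) Γ(a)Γ(b)), i.e., S_n(a,b;c) · n^{c−a−b} → Γ(c)/((a+b−c)Γ(a)Γ(b)). -/

import Mathlib

open Filter Finset Complex Topology



lemma natCast_inv_tendsto_C : Tendsto (fun k : ℕ => ((k:ℂ))⁻¹) atTop (𝓝 0) := by
  have h : Tendsto (fun k : ℕ => ((k:ℝ))⁻¹) atTop (𝓝 0) :=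
    tendsto_inv_atTop_zero.comp tendsto_natCast_atTop_atTop
  have h2 := (Complex.continuous_ofReal.tendsto 0).comp h
  simpa [Function.comp_def] using h2

lemma cpow_slope_limit (s : ℂ) :
    Tendsto (fun k : ℕ => (k : ℂ) * ((1 + 1/(k:ℂ)) ^ s - 1)) atTop (𝓝 s) := by
  have hd : HasDerivAt (fun z : ℂ => z ^ s) (s * (1:ℂ) ^ (s - 1)) 1 :=
    (Complex.hasStrictDerivAt_cpow_const (by norm_num [Complex.slitPlane])).hasDerivAt
  rw [Complex.one_cpow, mul_one, hasDerivAt_iff_tendsto_slope] at hd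
  have hseq : Tendsto (fun k : ℕ => 1 + 1/(k:ℂ)) atTop (𝓝[≠] 1) := by
    rw [tendsto_nhdsWithin_iff]
    constructor
    · have : Tendsto (fun k : ℕ => 1 + ((k:ℂ))⁻¹) atTop (𝓝 (1 + 0)) :=
        tendsto_const_nhds.add natCast_inv_tendsto_C
      simpa [one_div] using this
    · filter_upwards [eventually_ge_atTop 1] with k hk
      have hk0 : (k:ℂ) ≠ 0 := Nat.cast_ne_zero.2 (by omega)
      simp [Set.mem_compl_iff, one_div, hk0]
  have := hd.comp hseq
  refine this.congr' ?_
  filter_upwards [eventually_ge_atTop 1] with k hk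
  have hk0 : (k:ℂ) ≠ 0 := Nat.cast_ne_zero.2 (by omega)
  simp only [Function.comp_def, slope_def_field, Complex.one_cpow]
  rw [add_sub_cancel_left, div_div_eq_mul_div]
  ring

lemma rpow_slope_limit (σ : ℝ) :
    Tendsto (fun k : ℕ => (k : ℝ) * ((1 + 1/(k:ℝ)) ^ σ - 1)) atTop (𝓝 σ) := by
  have hd : HasDerivAt (fun z : ℝ => z ^ σ) (σ * (1:ℝ) ^ (σ - 1)) 1 :=
    Real.hasDerivAt_rpow_const (Or.inl one_ne_zero)
  rw [Real.one_rpow, mul_one, hasDerivAt_iff_tendsto_slope] at hd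
  have hseq : Tendsto (fun k : ℕ => 1 + 1/(k:ℝ)) atTop (𝓝[≠] 1) := by
    rw [tendsto_nhdsWithin_iff]
    constructor
    · have : Tendsto (fun k : ℕ => 1 + ((k:ℝ))⁻¹) atTop (𝓝 (1 + 0)) :=
        tendsto_const_nhds.add (tendsto_inv_atTop_zero.comp tendsto_natCast_atTop_atTop)
      simpa [one_div] using this
    · filter_upwards [eventually_ge_atTop 1] with k hk
      have hk0 : (k:ℝ) ≠ 0 := Nat.cast_ne_zero.2 (by omega)
      simp [Set.mem_compl_iff, one_div, hk0]
  have := hd.comp hseq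
  refine this.congr' ?_
  filter_upwards [eventually_ge_atTop 1] with k hk
  have hk0 : (k:ℝ) ≠ 0 := Nat.cast_ne_zero.2 (by omega)
  simp only [Function.comp_def, slope_def_field, Real.one_rpow]
  rw [add_sub_cancel_left, div_div_eq_mul_div]
  ring


lemma sum_cpow_telescope (s : ℂ) (hs : s ≠ 0) (n : ℕ) :
    ∑ k ∈ range n, (((k:ℂ)+1) ^ s - (k:ℂ) ^ s) = (n:ℂ) ^ s := by
  have := Finset.sum_range_sub (fun k : ℕ => ((k:ℂ)) ^ s) n
  simp only [Nat.cast_add, Nat.cast_one] at this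
  rw [this, Nat.cast_zero, Complex.zero_cpow hs, sub_zero]

lemma sum_rpow_telescope (σ : ℝ) (hσ : σ ≠ 0) (n : ℕ) :
    ∑ k ∈ range n, (((k:ℝ)+1) ^ σ - (k:ℝ) ^ σ) = (n:ℝ) ^ σ := by
  have := Finset.sum_range_sub (fun k : ℕ => ((k:ℝ)) ^ σ) n
  simp only [Nat.cast_add, Nat.cast_one] at this
  rw [this, Nat.cast_zero, Real.zero_rpow hσ, sub_zero]

lemma stolz_zero (u h : ℕ → ℝ) (hu0 : ∀ k, 0 ≤ u k) (hh0 : ∀ k, 0 < h k)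
    (hH : Tendsto (fun n => ∑ k ∈ range n, h k) atTop atTop)
    (huh : Tendsto (fun k => u k / h k) atTop (𝓝 0)) :
    Tendsto (fun n => (∑ k ∈ range n, u k) / (∑ k ∈ range n, h k)) atTop (𝓝 0) := by
  have hU0 : ∀ n, 0 ≤ ∑ k ∈ range n, u k := fun n => Finset.sum_nonneg fun k _ => hu0 k
  have hH0 : ∀ n, 0 ≤ ∑ k ∈ range n, h k := fun n =>
    Finset.sum_nonneg fun k _ => (hh0 k).le
  rw [tendsto_order]
  constructor
  · intro a ha
    filter_upwards with n
    exact lt_of_lt_of_le ha (div_nonneg (hU0 n) (hH0 n))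
  · intro a ha
    have h2 : (0:ℝ) < a / 2 := by linarith
    obtain ⟨N, hN⟩ := (huh.eventually (gt_mem_nhds h2)).exists_forall_of_atTop
    have hconst : Tendsto (fun n => (∑ k ∈ range N, u k) / ∑ k ∈ range n, h k)
        atTop (𝓝 0) := Tendsto.div_atTop tendsto_const_nhds hH
    filter_upwards [eventually_ge_atTop N, hH.eventually_gt_atTop 0,
      hconst.eventually (gt_mem_nhds h2)] with n hn hHn hcn
    rw [div_lt_iff₀ hHn]
    have key : ∑ k ∈ range n, u k ≤ (∑ k ∈ range N, u k) + a/2 * ∑ k ∈ range n, h k := by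
      rw [Finset.range_eq_Ico, Finset.range_eq_Ico, ← Finset.sum_Ico_consecutive _ (Nat.zero_le N) hn]
      gcongr
      calc ∑ k ∈ Finset.Ico N n, u k ≤ ∑ k ∈ Finset.Ico N n, a/2 * h k := by
            refine Finset.sum_le_sum fun k hk => ?_
            have := hN k (Finset.mem_Ico.1 hk).1
            rw [div_lt_iff₀ (hh0 k)] at this
            linarith
        _ ≤ ∑ k ∈ Finset.Ico 0 n, a/2 * h k := by
            refine Finset.sum_le_sum_of_subset_of_nonneg
              (Finset.Ico_subset_Ico (Nat.zero_le _) le_rfl) fun k _ _ => ?_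
            exact mul_nonneg (by linarith) (hh0 k).le
        _ = a/2 * ∑ k ∈ Finset.Ico 0 n, h k := by rw [Finset.mul_sum]
    calc ∑ k ∈ range n, u k ≤ (∑ k ∈ range N, u k) + a/2 * ∑ k ∈ range n, h k := key
      _ < a/2 * (∑ k ∈ range n, h k) + a/2 * ∑ k ∈ range n, h k := by
          rw [div_lt_iff₀ hHn] at hcn; linarith
      _ = a * ∑ k ∈ range n, h k := by ring



lemma key_cesaro (s : ℂ) (hs : 0 < s.re) (t : ℕ → ℂ) (L : ℂ)
    (ht : Tendsto (fun k : ℕ => t k * (k:ℂ) ^ ((1:ℂ) - s)) atTop (𝓝 L)) :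
    Tendsto (fun n : ℕ => (∑ k ∈ range n, t k) * (n:ℂ) ^ (-s)) atTop (𝓝 (L / s)) := by
  have hs0 : s ≠ 0 := fun h => by simp [h] at hs
  have hsre : s.re ≠ 0 := ne_of_gt hs
  set σ := s.re with hσ_def
  set g : ℕ → ℂ := fun k => (((k:ℂ)+1) ^ s - (k:ℂ) ^ s) / s with hg_def
  have hsplit : ∀ k : ℕ, 1 ≤ k → ((k:ℂ)+1) ^ s = (k:ℂ)^s * (1 + 1/(k:ℂ))^s := by
    intro k hk
    have hk0 : (k:ℝ) ≠ 0 := Nat.cast_ne_zero.2 (by omega)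
    have hk0C : (k:ℂ) ≠ 0 := Nat.cast_ne_zero.2 (by omega)
    have h1 : ((k:ℂ)+1) = ((k:ℝ):ℂ) * ((1 + 1/(k:ℝ) : ℝ):ℂ) := by
      push_cast
      rw [mul_add, mul_one, mul_one_div, div_self hk0C]
    have e1 : (((k:ℝ)):ℂ) = (k:ℂ) := by push_cast; ring
    have e2 : ((1 + 1/(k:ℝ) : ℝ):ℂ) = 1 + 1/(k:ℂ) := by push_cast; ring
    rw [h1, Complex.mul_cpow_ofReal_nonneg (by positivity) (by positivity), e1, e2]
  have hg1 : Tendsto (fun k : ℕ => g k * (k:ℂ) ^ ((1:ℂ) - s)) atTop (𝓝 1) := by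
    have hlim : Tendsto (fun k : ℕ => (k:ℂ) * ((1 + 1/(k:ℂ))^s - 1) / s) atTop (𝓝 1) := by
      simpa [div_self hs0] using (cpow_slope_limit s).div_const s
    refine hlim.congr' ?_
    filter_upwards [eventually_ge_atTop 1] with k hk
    have hk0 : (k:ℂ) ≠ 0 := Nat.cast_ne_zero.2 (by omega)
    have hkk : (k:ℂ)^s * (k:ℂ)^((1:ℂ)-s) = (k:ℂ) := by
      rw [← Complex.cpow_add _ _ hk0, show s + ((1:ℂ)-s) = 1 by ring, Complex.cpow_one]
    show (k:ℂ) * ((1 + 1/(k:ℂ))^s - 1) / s = g k * (k:ℂ) ^ ((1:ℂ) - s)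
    rw [hg_def]
    simp only []
    rw [hsplit k hk, div_mul_eq_mul_div]
    congr 1
    linear_combination (1 - (1 + 1/(k:ℂ))^s) * hkk
  set e : ℕ → ℂ := fun k => t k - L * g k with he_def
  have he : Tendsto (fun k : ℕ => e k * (k:ℂ) ^ ((1:ℂ) - s)) atTop (𝓝 0) := by
    have := ht.sub (hg1.const_mul L)
    simpa [he_def, sub_mul, mul_assoc] using this
  have hu : Tendsto (fun k : ℕ => ‖e k‖ * (k:ℝ) ^ (1 - σ)) atTop (𝓝 0) := by
    have := he.norm
    rw [norm_zero] at this
    refine this.congr' ?_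
    filter_upwards [eventually_ge_atTop 1] with k hk
    rw [norm_mul, Complex.norm_natCast_cpow_of_pos hk]
    simp [Complex.sub_re, hσ_def]
  set h : ℕ → ℝ := fun k => ((k:ℝ)+1) ^ σ - (k:ℝ) ^ σ with hh_def
  have hh0 : ∀ k, 0 < h k := fun k =>
    sub_pos.2 (Real.rpow_lt_rpow (Nat.cast_nonneg k) (by linarith) hs)
  have hHsum : ∀ n, ∑ k ∈ range n, h k = (n:ℝ) ^ σ := fun n => sum_rpow_telescope σ hsre n
  have hH : Tendsto (fun n => ∑ k ∈ range n, h k) atTop atTop := by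
    refine Tendsto.congr (fun n => (hHsum n).symm) ?_
    exact (tendsto_rpow_atTop hs).comp tendsto_natCast_atTop_atTop
  have hh1 : Tendsto (fun k : ℕ => h k * (k:ℝ) ^ (1 - σ)) atTop (𝓝 σ) := by
    refine (rpow_slope_limit σ).congr' ?_
    filter_upwards [eventually_ge_atTop 1] with k hk
    have hk0 : (0:ℝ) < (k:ℝ) := by exact_mod_cast Nat.pos_of_ne_zero (by omega)
    have hkk : (k:ℝ)^σ * (k:ℝ)^(1-σ) = (k:ℝ) := by
      rw [← Real.rpow_add hk0, show σ + (1-σ) = 1 by ring, Real.rpow_one]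
    have hsplitR : ((k:ℝ)+1) ^ σ = (k:ℝ)^σ * (1 + 1/(k:ℝ))^σ := by
      rw [← Real.mul_rpow (le_of_lt hk0) (by positivity)]
      congr 1
      field_simp
    show (k:ℝ) * ((1 + 1/(k:ℝ))^σ - 1) = h k * (k:ℝ) ^ (1 - σ)
    rw [hh_def]
    simp only []
    rw [hsplitR]
    linear_combination (1 - (1 + 1/(k:ℝ))^σ) * hkk
  have huh : Tendsto (fun k : ℕ => ‖e k‖ / h k) atTop (𝓝 0) := by
    have hinv : Tendsto (fun k : ℕ => (h k * (k:ℝ) ^ (1-σ))⁻¹) atTop (𝓝 σ⁻¹) :=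
      hh1.inv₀ hsre
    have hmul := hu.mul hinv
    rw [zero_mul] at hmul
    refine hmul.congr' ?_
    filter_upwards [eventually_ge_atTop 1] with k hk
    have hk0 : (0:ℝ) < (k:ℝ) := by exact_mod_cast Nat.pos_of_ne_zero (by omega)
    have hx : ((k:ℝ) ^ (1-σ)) ≠ 0 := ne_of_gt (Real.rpow_pos_of_pos hk0 _)
    show ‖e k‖ * (k:ℝ)^(1-σ) * (h k * (k:ℝ)^(1-σ))⁻¹ = ‖e k‖ / h k
    calc ‖e k‖ * (k:ℝ)^(1-σ) * (h k * (k:ℝ)^(1-σ))⁻¹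
        = ‖e k‖ * (h k)⁻¹ * ((k:ℝ)^(1-σ) * ((k:ℝ)^(1-σ))⁻¹) := by rw [mul_inv]; ring
      _ = ‖e k‖ / h k := by rw [mul_inv_cancel₀ hx, mul_one, div_eq_mul_inv]
  have hstolz : Tendsto (fun n => (∑ k ∈ range n, ‖e k‖) / (n:ℝ)^σ) atTop (𝓝 0) := by
    have := stolz_zero (fun k => ‖e k‖) h (fun k => norm_nonneg _) hh0 hH huh
    refine this.congr fun n => ?_
    rw [hHsum n]
  have hE : Tendsto (fun n : ℕ => (∑ k ∈ range n, e k) * (n:ℂ) ^ (-s)) atTop (𝓝 0) := by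
    refine squeeze_zero_norm' ?_ hstolz
    filter_upwards [eventually_ge_atTop 1] with n hn
    rw [norm_mul, Complex.norm_natCast_cpow_of_pos hn]
    have hn0 : (0:ℝ) < (n:ℝ) := by exact_mod_cast Nat.pos_of_ne_zero (by omega)
    rw [Complex.neg_re, Real.rpow_neg (le_of_lt hn0), div_eq_mul_inv]
    gcongr
    exact norm_sum_le _ _
  have hfinal : ∀ᶠ n : ℕ in atTop,
      L/s + (∑ k ∈ range n, e k) * (n:ℂ)^(-s) = (∑ k ∈ range n, t k) * (n:ℂ)^(-s) := by
    filter_upwards [eventually_ge_atTop 1] with n hn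
    have hn0 : (n:ℂ) ≠ 0 := Nat.cast_ne_zero.2 (by omega)
    have hone : (n:ℂ)^s * (n:ℂ)^(-s) = 1 := by
      rw [← Complex.cpow_add _ _ hn0, add_neg_cancel, Complex.cpow_zero]
    have hsum_t : ∑ k ∈ range n, t k = L * ((n:ℂ)^s/s) + ∑ k ∈ range n, e k := by
      have hterm : ∀ k, t k = L * g k + e k := fun k => by rw [he_def]; ring
      rw [Finset.sum_congr rfl (fun k _ => hterm k), Finset.sum_add_distrib, ← Finset.mul_sum]
      congr 2
      rw [hg_def, ← Finset.sum_div, sum_cpow_telescope s hs0]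
    rw [hsum_t, add_mul]
    congr 1
    rw [show L * ((n:ℂ)^s/s) * (n:ℂ)^(-s) = L/s * ((n:ℂ)^s * (n:ℂ)^(-s)) by ring, hone,
      mul_one]
  have hfin := (tendsto_const_nhds.add hE).congr' hfinal
  simpa using hfin


/-- The Pochhammer (rising factorial) symbol `(x)_k` for complex `x`. -/
noncomputable def cpoch (x : ℂ) (k : ℕ) : ℂ := ∏ i ∈ Finset.range k, (x + i)



lemma cpoch_ne_zero {x : ℂ} (hx : ∀ j : ℕ, x ≠ -(j : ℂ)) (n : ℕ) : cpoch x n ≠ 0 := by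
  refine Finset.prod_ne_zero_iff.2 fun i _ h => ?_
  exact hx i (add_eq_zero_iff_eq_neg.1 h)

lemma cpoch_tendsto (x : ℂ) (hx : ∀ j : ℕ, x ≠ -(j:ℂ)) :
    Tendsto (fun n : ℕ => cpoch x n * (n:ℂ) ^ ((1:ℂ) - x) / (Nat.factorial n : ℂ))
      atTop (𝓝 (Complex.Gamma x)⁻¹) := by
  have hxn : ∀ n : ℕ, x + n ≠ 0 := fun n h => hx n (add_eq_zero_iff_eq_neg.1 h)
  have hratio : Tendsto (fun n : ℕ => (n:ℂ) / (x + n)) atTop (𝓝 1) := by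
    have h1 : Tendsto (fun n : ℕ => x * ((n:ℂ))⁻¹ + 1) atTop (𝓝 1) := by
      have := (natCast_inv_tendsto_C.const_mul x).add (tendsto_const_nhds (x := (1:ℂ)))
      simpa using this
    have h2 : Tendsto (fun n : ℕ => (x * ((n:ℂ))⁻¹ + 1)⁻¹) atTop (𝓝 1) := by
      simpa using h1.inv₀ one_ne_zero
    refine h2.congr' ?_
    filter_upwards [eventually_ge_atTop 1] with n hn
    have hn0 : (n:ℂ) ≠ 0 := Nat.cast_ne_zero.2 (by omega)
    rw [show x * ((n:ℂ))⁻¹ + 1 = (x + n) / n by field_simp, inv_div]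
  have hGS : ∀ n : ℕ, 1 ≤ n →
      cpoch x n * (n:ℂ) ^ ((1:ℂ) - x) / (Nat.factorial n : ℂ)
        = (n:ℂ)/(x+n) * (Complex.GammaSeq x n)⁻¹ := by
    intro n hn
    have hn0 : (n:ℂ) ≠ 0 := Nat.cast_ne_zero.2 (by omega)
    have hP := cpoch_ne_zero hx n
    have hfac : ((Nat.factorial n : ℕ) : ℂ) ≠ 0 := Nat.cast_ne_zero.2 n.factorial_ne_zero
    have hpx : (n:ℂ) ^ x ≠ 0 := by simp [Complex.cpow_eq_zero_iff, hn0]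
    have hGdef : Complex.GammaSeq x n = (n:ℂ)^x * (Nat.factorial n : ℂ) / (cpoch x n * (x + n)) := by
      rw [Complex.GammaSeq, Finset.prod_range_succ]
      rfl
    have hone : (n:ℂ) ^ ((1:ℂ)-x) = (n:ℂ) * ((n:ℂ)^x)⁻¹ := by
      rw [show (1:ℂ) - x = 1 + (-x) by ring, Complex.cpow_add _ _ hn0, Complex.cpow_one,
        Complex.cpow_neg]
    rw [hGdef, hone, inv_div]
    field_simp [hxn n]
  have hmain := hratio.mul ((Complex.GammaSeq_tendsto_Gamma x).inv₀ (Complex.Gamma_ne_zero hx))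
  rw [one_mul] at hmain
  refine hmain.congr' ?_
  filter_upwards [eventually_ge_atTop 1] with n hn
  exact (hGS n hn).symm

/-- Hill's leading asymptotic when `Re(c−a−b) < 0` and `c−a−b` is not an integer:
`S_n(a,b;c) · n^{c−a−b} → Γ(c)/((a+b−c)Γ(a)Γ(b))`. -/
theorem hill_divergent_asymptotic (a b c : ℂ) (hs : (c - a - b).re < 0)
    (hsint : ∀ z : ℤ, c - a - b ≠ (z : ℂ))
    (ha : ∀ j : ℕ, a ≠ -(j : ℂ)) (hb : ∀ j : ℕ, b ≠ -(j : ℂ)) (hc : ∀ j : ℕ, c ≠ -(j : ℂ))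
    (hca : ∀ j : ℕ, c - a ≠ -(j : ℂ)) (hcb : ∀ j : ℕ, c - b ≠ -(j : ℂ)) :
    Filter.Tendsto
      (fun n : ℕ =>
        (∑ k ∈ Finset.range n,
            cpoch a k * cpoch b k / (cpoch c k * (Nat.factorial k : ℂ)))
          * (n : ℂ) ^ (c - a - b))
      Filter.atTop
      (nhds (Complex.Gamma c / ((a + b - c) * Complex.Gamma a * Complex.Gamma b))) := by
  set s : ℂ := a + b - c with hs_def
  have hsre : 0 < s.re := by
    have h1 : (c - a - b) = -s := by rw [hs_def]; ring
    rw [h1, Complex.neg_re] at hs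
    linarith
  set t : ℕ → ℂ := fun k => cpoch a k * cpoch b k / (cpoch c k * (Nat.factorial k : ℂ))
    with ht_def
  have hA := cpoch_tendsto a ha
  have hB := cpoch_tendsto b hb
  have hC := cpoch_tendsto c hc
  have hden : (Complex.Gamma c)⁻¹ ≠ 0 := inv_ne_zero (Complex.Gamma_ne_zero hc)
  have hQ := (hA.mul hB).div hC hden
  have ht : Tendsto (fun k : ℕ => t k * (k:ℂ) ^ ((1:ℂ) - s)) atTop
      (𝓝 (((Complex.Gamma a)⁻¹ * (Complex.Gamma b)⁻¹) / (Complex.Gamma c)⁻¹)) := by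
    refine hQ.congr' ?_
    filter_upwards [eventually_ge_atTop 1] with n hn
    have hn0 : (n:ℂ) ≠ 0 := Nat.cast_ne_zero.2 (by omega)
    have hPc := cpoch_ne_zero hc n
    have hfac : ((Nat.factorial n : ℕ) : ℂ) ≠ 0 := Nat.cast_ne_zero.2 n.factorial_ne_zero
    have hpc : (n:ℂ) ^ ((1:ℂ) - c) ≠ 0 := by simp [Complex.cpow_eq_zero_iff, hn0]
    have hpow : (n:ℂ) ^ ((1:ℂ)-a) * (n:ℂ) ^ ((1:ℂ)-b) = (n:ℂ) ^ ((1:ℂ)-c) * (n:ℂ) ^ ((1:ℂ)-s) := by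
      rw [← Complex.cpow_add _ _ hn0, ← Complex.cpow_add _ _ hn0]
      congr 1
      rw [hs_def]; ring
    rw [ht_def]
    simp only [Pi.div_apply]
    field_simp
    linear_combination cpoch a n * cpoch b n * hpow
  have hmain := key_cesaro s hsre t _ ht
  have hconv : (((Complex.Gamma a)⁻¹ * (Complex.Gamma b)⁻¹) / (Complex.Gamma c)⁻¹) / s
      = Complex.Gamma c / ((a + b - c) * Complex.Gamma a * Complex.Gamma b) := by
    rw [hs_def]
    simp only [div_eq_mul_inv, mul_inv, inv_inv]
    ring
  rw [hconv] at hmain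
  refine hmain.congr fun n => ?_
  rw [show c - a - b = -s by rw [hs_def]; ring]
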